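/- Let X be a nonnegative random variable, α > 1, ρ ∈ (0,1), and suppose E[X] < ∞ and X satisfies X =ᵈ (1−U)^{1/α} X + U^{1/α} S with (S, U) independent of X, U ∼ Beta(1,ρ), and E[S] < ∞. Then E[X] = (Γ(1/α)Γ(1+ρ)/Γ(ρ+1/α)) · E[S]. -/

import Mathlib

open MeasureTheory ProbabilityTheory

/-- The `Beta(1, ρ)` distribution on `[0,1]`, with density `u ↦ ρ (1-u)^(ρ-1)`. -/
noncomputable def betaOneLaw (ρ : ℝ) : Measure ℝ :=
  (volume.restrict (Set.Ioo (0 : ℝ) 1)).withDensity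
    fun u => ENNReal.ofReal (ρ * (1 - u) ^ (ρ - 1))


lemma betaOneLaw_integral (ρ : ℝ) (g : ℝ → ℝ) :
    ∫ u, g u ∂betaOneLaw ρ =
      ∫ u in Set.Ioo (0:ℝ) 1, max (ρ * (1 - u) ^ (ρ - 1)) 0 * g u := by
  have hmeas : Measurable fun u : ℝ => (ρ * (1 - u) ^ (ρ - 1)).toNNReal := by
    refine Measurable.real_toNNReal ?_; fun_prop
  have h1 : betaOneLaw ρ = (volume.restrict (Set.Ioo (0:ℝ) 1)).withDensity
      fun u => ((ρ * (1 - u) ^ (ρ - 1)).toNNReal : ENNReal) := rfl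
  rw [h1, integral_withDensity_eq_integral_smul hmeas]
  refine integral_congr_ae (Filter.Eventually.of_forall fun u => ?_)
  simp [NNReal.smul_def, Real.coe_toNNReal']

lemma real_beta {a b : ℝ} (ha : 0 < a) (hb : 0 < b) :
    ∫ x in (0:ℝ)..1, x ^ (a - 1) * (1 - x) ^ (b - 1) =
      Real.Gamma a * Real.Gamma b / Real.Gamma (a + b) := by
  have hab : 0 < Real.Gamma (a + b) := Real.Gamma_pos_of_pos (by linarith)
  have key := Complex.Gamma_mul_Gamma_eq_betaIntegral
    (s := (a : ℂ)) (t := (b : ℂ)) (by simpa using ha) (by simpa using hb)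
  have hBeta : Complex.betaIntegral a b =
      ((∫ x in (0:ℝ)..1, x ^ (a - 1) * (1 - x) ^ (b - 1) : ℝ) : ℂ) := by
    rw [Complex.betaIntegral, ← intervalIntegral.integral_ofReal]
    refine intervalIntegral.integral_congr fun x hx => ?_
    rw [Set.uIcc_of_le (by norm_num)] at hx
    push_cast
    rw [Complex.ofReal_cpow hx.1, Complex.ofReal_cpow (by linarith [hx.2])]
    push_cast
    ring
  rw [hBeta, ← Complex.ofReal_add, Complex.Gamma_ofReal, Complex.Gamma_ofReal,
    Complex.Gamma_ofReal, ← Complex.ofReal_mul, ← Complex.ofReal_mul] at key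
  have := Complex.ofReal_inj.mp key
  field_simp
  linarith [this]

lemma Ioo_to_interval (f : ℝ → ℝ) :
    ∫ u in Set.Ioo (0:ℝ) 1, f u = ∫ u in (0:ℝ)..1, f u := by
  rw [intervalIntegral.integral_of_le (by norm_num), integral_Ioc_eq_integral_Ioo]

lemma betaOneLaw_moment_one_sub (ρ c : ℝ) (hρ : 0 < ρ) (hc : 0 < c) :
    ∫ u, (1 - u) ^ c ∂betaOneLaw ρ = ρ / (ρ + c) := by
  rw [betaOneLaw_integral]
  have hcongr : ∫ u in Set.Ioo (0:ℝ) 1, max (ρ * (1 - u) ^ (ρ - 1)) 0 * (1 - u) ^ c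
      = ∫ u in Set.Ioo (0:ℝ) 1, ρ * (1 - u) ^ (ρ + c - 1) := by
    refine setIntegral_congr_fun measurableSet_Ioo fun u hu => ?_
    have h1u : (0:ℝ) < 1 - u := by linarith [hu.2]
    have hnn : 0 ≤ ρ * (1 - u) ^ (ρ - 1) :=
      mul_nonneg hρ.le (Real.rpow_nonneg h1u.le _)
    rw [max_eq_left hnn, mul_assoc, ← Real.rpow_add h1u]
    ring_nf
  rw [hcongr, Ioo_to_interval]
  have : ∫ u in (0:ℝ)..1, ρ * (1 - u) ^ (ρ + c - 1)
      = ρ * ∫ u in (0:ℝ)..1, (1 - u) ^ (ρ + c - 1) := by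
    rw [intervalIntegral.integral_const_mul]
  rw [this]
  have hcs : ∫ u in (0:ℝ)..1, (1 - u) ^ (ρ + c - 1)
      = ∫ u in (0:ℝ)..1, u ^ (ρ + c - 1) := by
    have := intervalIntegral.integral_comp_sub_left
      (a := 0) (b := 1) (fun x => x ^ (ρ + c - 1)) 1
    simpa using this
  rw [hcs, integral_rpow (Or.inl (by linarith))]
  rw [Real.one_rpow, Real.zero_rpow (by linarith)]
  field_simp
  rw [show ρ + c - 1 + 1 = ρ + c by ring, sub_zero, one_mul, div_self (by linarith)]

lemma betaOneLaw_moment_rpow (ρ c : ℝ) (hρ : 0 < ρ) (hc : 0 < c) :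
    ∫ u, u ^ c ∂betaOneLaw ρ =
      Real.Gamma (c + 1) * Real.Gamma (ρ + 1) / Real.Gamma (c + 1 + ρ) := by
  rw [betaOneLaw_integral]
  have hcongr : ∫ u in Set.Ioo (0:ℝ) 1, max (ρ * (1 - u) ^ (ρ - 1)) 0 * u ^ c
      = ∫ u in Set.Ioo (0:ℝ) 1, ρ * (u ^ ((c + 1) - 1) * (1 - u) ^ (ρ - 1)) := by
    refine setIntegral_congr_fun measurableSet_Ioo fun u hu => ?_
    have h1u : (0:ℝ) < 1 - u := by linarith [hu.2]
    have hnn : 0 ≤ ρ * (1 - u) ^ (ρ - 1) :=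
      mul_nonneg hρ.le (Real.rpow_nonneg h1u.le _)
    rw [max_eq_left hnn]
    ring_nf
  rw [hcongr, Ioo_to_interval, intervalIntegral.integral_const_mul,
    real_beta (by linarith : (0:ℝ) < c + 1) hρ]
  rw [Real.Gamma_add_one hρ.ne']
  field_simp

/-- **Mean of the solution of the stable-meander perpetuity.**  Let `X ≥ 0` be integrable,
`α > 1`, `ρ ∈ (0,1)`, and suppose `X =ᵈ (1-U)^{1/α} X + U^{1/α} S` with `(S,U)`
independent of `X`, `S` and `U` independent, `U ∼ Beta(1,ρ)` and `E[S] < ∞`.  Then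
`E[X] = Γ(1/α) Γ(1+ρ) / Γ(ρ+1/α) · E[S]`. -/
theorem perpetuity_mean
    {Ω : Type*} [MeasureSpace Ω] [IsProbabilityMeasure (ℙ : Measure Ω)]
    (α ρ : ℝ) (hα : 1 < α) (hρ : ρ ∈ Set.Ioo (0 : ℝ) 1)
    (X S U : Ω → ℝ)
    (hXm : Measurable X) (hSm : Measurable S) (hUm : Measurable U)
    (hX0 : ∀ ω, 0 ≤ X ω)
    (hXint : Integrable X ℙ) (hSint : Integrable S ℙ)
    (hU : Measure.map U ℙ = betaOneLaw ρ)
    (hSU : IndepFun S U ℙ)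
    (hX_SU : IndepFun X (fun ω => (S ω, U ω)) ℙ)
    (hperp : Measure.map
        (fun ω => (1 - U ω) ^ (1 / α) * X ω + (U ω) ^ (1 / α) * S ω) ℙ
      = Measure.map X ℙ) :
    ∫ ω, X ω ∂ℙ =
      (Real.Gamma (1 / α) * Real.Gamma (1 + ρ) / Real.Gamma (ρ + 1 / α)) *
        ∫ ω, S ω ∂ℙ := by
  obtain ⟨hρ0, hρ1⟩ := hρ
  set c : ℝ := 1 / α with hc_def
  have hc : 0 < c := by positivity
  clear_value c
  -- U lies in (0,1) a.s.
  have hUmem : ∀ᵐ ω ∂ℙ, U ω ∈ Set.Ioo (0:ℝ) 1 := by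
    have hmap : ℙ (U ⁻¹' (Set.Ioo (0:ℝ) 1)ᶜ) = 0 := by
      rw [← Measure.map_apply hUm measurableSet_Ioo.compl, hU, betaOneLaw,
        withDensity_apply _ measurableSet_Ioo.compl,
        Measure.restrict_restrict measurableSet_Ioo.compl, Set.compl_inter_self]
      simp
    rw [ae_iff]
    exact hmap
  -- measurability of the pieces
  have hm1 : Measurable fun ω => (1 - U ω) ^ c * X ω := by fun_prop
  have hm2 : Measurable fun ω => (U ω) ^ c * S ω := by fun_prop
  -- integrability
  have hf1 : Integrable (fun ω => (1 - U ω) ^ c * X ω) ℙ := by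
    refine Integrable.mono' hXint.abs hm1.aestronglyMeasurable ?_
    filter_upwards [hUmem] with ω hω
    rw [Real.norm_eq_abs, abs_mul]
    have h1 : |(1 - U ω) ^ c| ≤ 1 := by
      rw [abs_of_nonneg (Real.rpow_nonneg (by linarith [hω.2]) _)]
      exact Real.rpow_le_one (by linarith [hω.2]) (by linarith [hω.1]) hc.le
    calc |(1 - U ω) ^ c| * |X ω| ≤ 1 * |X ω| :=
          mul_le_mul_of_nonneg_right h1 (abs_nonneg _)
      _ = |X ω| := one_mul _
  have hf2 : Integrable (fun ω => (U ω) ^ c * S ω) ℙ := by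
    refine Integrable.mono' hSint.abs hm2.aestronglyMeasurable ?_
    filter_upwards [hUmem] with ω hω
    rw [Real.norm_eq_abs, abs_mul]
    have h1 : |(U ω) ^ c| ≤ 1 := by
      rw [abs_of_nonneg (Real.rpow_nonneg hω.1.le _)]
      exact Real.rpow_le_one hω.1.le hω.2.le hc.le
    calc |(U ω) ^ c| * |S ω| ≤ 1 * |S ω| :=
          mul_le_mul_of_nonneg_right h1 (abs_nonneg _)
      _ = |S ω| := one_mul _
  -- E[X] = E[(1-U)^c X] + E[U^c S]
  have hEX : ∫ ω, X ω ∂ℙ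
      = (∫ ω, (1 - U ω) ^ c * X ω ∂ℙ) + ∫ ω, (U ω) ^ c * S ω ∂ℙ := by
    have hfm : Measurable fun ω => (1 - U ω) ^ c * X ω + (U ω) ^ c * S ω := hm1.add hm2
    calc ∫ ω, X ω ∂ℙ
        = ∫ y, y ∂(Measure.map X ℙ) := (integral_map hXm.aemeasurable
            measurable_id.aestronglyMeasurable).symm
      _ = ∫ y, y ∂(Measure.map (fun ω => (1 - U ω) ^ c * X ω + (U ω) ^ c * S ω) ℙ) := by
            rw [hperp]
      _ = ∫ ω, (1 - U ω) ^ c * X ω + (U ω) ^ c * S ω ∂ℙ :=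
            integral_map hfm.aemeasurable measurable_id.aestronglyMeasurable
      _ = (∫ ω, (1 - U ω) ^ c * X ω ∂ℙ) + ∫ ω, (U ω) ^ c * S ω ∂ℙ :=
            integral_add hf1 hf2
  -- independence factorizations
  have hAind : IndepFun (fun ω => (1 - U ω) ^ c) X ℙ := by
    have := (hX_SU.comp measurable_id
      (show Measurable fun p : ℝ × ℝ => (1 - p.2) ^ c by fun_prop)).symm
    exact this
  have hBind : IndepFun (fun ω => (U ω) ^ c) S ℙ := by
    have := hSU.symm.comp (show Measurable fun x : ℝ => x ^ c by fun_prop) measurable_id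
    exact this
  have hsplit1 : ∫ ω, (1 - U ω) ^ c * X ω ∂ℙ
      = (∫ ω, (1 - U ω) ^ c ∂ℙ) * ∫ ω, X ω ∂ℙ := by
    have := hAind.integral_mul_eq_mul_integral (by fun_prop : Measurable fun ω => (1 - U ω) ^ c).aestronglyMeasurable
      hXm.aestronglyMeasurable
    simpa [Pi.mul_apply] using this
  have hsplit2 : ∫ ω, (U ω) ^ c * S ω ∂ℙ
      = (∫ ω, (U ω) ^ c ∂ℙ) * ∫ ω, S ω ∂ℙ := by
    have := hBind.integral_mul_eq_mul_integral (by fun_prop : Measurable fun ω => (U ω) ^ c).aestronglyMeasurable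
      hSm.aestronglyMeasurable
    simpa [Pi.mul_apply] using this
  -- moments of U
  have hmomA : ∫ ω, (1 - U ω) ^ c ∂ℙ = ρ / (ρ + c) := by
    have h := integral_map (μ := ℙ) hUm.aemeasurable
      (f := fun u : ℝ => (1 - u) ^ c)
      ((show Measurable fun u : ℝ => (1 - u) ^ c by fun_prop).aestronglyMeasurable)
    rw [hU] at h
    rw [← h, betaOneLaw_moment_one_sub ρ c hρ0 hc]
  have hmomB : ∫ ω, (U ω) ^ c ∂ℙ
      = Real.Gamma (c + 1) * Real.Gamma (ρ + 1) / Real.Gamma (c + 1 + ρ) := by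
    have h := integral_map (μ := ℙ) hUm.aemeasurable
      (f := fun u : ℝ => u ^ c)
      ((show Measurable fun u : ℝ => u ^ c by fun_prop).aestronglyMeasurable)
    rw [hU] at h
    rw [← h, betaOneLaw_moment_rpow ρ c hρ0 hc]
  -- algebra
  set E := ∫ ω, X ω ∂ℙ
  set ES := ∫ ω, S ω ∂ℙ
  rw [hsplit1, hsplit2, hmomA, hmomB] at hEX
  have hρc : (0:ℝ) < ρ + c := by linarith
  have hG1 : Real.Gamma (c + 1) = c * Real.Gamma c := Real.Gamma_add_one hc.ne'
  have hG2 : Real.Gamma (c + 1 + ρ) = (c + ρ) * Real.Gamma (c + ρ) := by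
    have : c + 1 + ρ = (c + ρ) + 1 := by ring
    rw [this, Real.Gamma_add_one (by linarith)]
  have hG3 : Real.Gamma (ρ + 1) = Real.Gamma (1 + ρ) := by rw [add_comm]
  have hG4 : Real.Gamma (ρ + c) = Real.Gamma (c + ρ) := by rw [add_comm]
  have hGpos : 0 < Real.Gamma (c + ρ) := Real.Gamma_pos_of_pos (by linarith)
  have hGcpos : 0 < Real.Gamma c := Real.Gamma_pos_of_pos hc
  rw [hG1, hG2, hG3] at hEX
  rw [hG4]
  have hcne : c ≠ 0 := hc.ne'
  have hαne : α ≠ 0 := by positivity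
  have hKrw : c * Real.Gamma c * Real.Gamma (1 + ρ) / ((c + ρ) * Real.Gamma (c + ρ)) * ES
      = c / (ρ + c) * (Real.Gamma c * Real.Gamma (1 + ρ) / Real.Gamma (c + ρ) * ES) := by
    rw [div_mul_eq_mul_div, div_mul_eq_mul_div, div_mul_eq_mul_div, mul_div_assoc]
    rw [show ρ + c = c + ρ from add_comm ρ c]
    field_simp
  rw [hKrw] at hEX
  set K := Real.Gamma c * Real.Gamma (1 + ρ) / Real.Gamma (c + ρ) * ES with hK
  have h5 : E * (ρ + c) = ρ * E + c * K := by
    calc E * (ρ + c) = (ρ / (ρ + c) * E + c / (ρ + c) * K) * (ρ + c) := by rw [← hEX]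
      _ = ρ * E + c * K := by field_simp
  have h6 : c * (E - K) = 0 := by linear_combination h5
  rcases mul_eq_zero.mp h6 with h | h
  · exact absurd h hcne
  · linarith [sub_eq_zero.mp h]
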